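/- Let X be a Polish space and μ a Borel probability measure on X. Then sup_{x∈X} μ({x}) = inf over finite open covers (U_1,...,U_n) of X of max_k μ(cl(U_k)), where cl denotes closure. -/

import Mathlib

open MeasureTheory Metric Set Filter Topology ENNReal

/-- Tightness: a finite Borel measure on a complete separable metric space has compact sets
of almost full measure. -/
lemma aux_tight {X : Type*} [MetricSpace X] [CompleteSpace X]
    [TopologicalSpace.SeparableSpace X] [Nonempty X]
    [MeasurableSpace X] [OpensMeasurableSpace X]
    (μ : Measure X) [IsFiniteMeasure μ] {ε : ℝ≥0∞} (hε : ε ≠ 0) :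
    ∃ K : Set X, IsCompact K ∧ μ Kᶜ ≤ ε := by
  obtain ⟨u, hu⟩ := TopologicalSpace.exists_dense_seq X
  set B : ℕ → ℕ → Set X :=
    fun n m => ⋃ i ∈ Finset.range (m + 1), closedBall (u i) (1 / (n + 1)) with hB
  have hBclosed : ∀ n m, IsClosed (B n m) := fun n m =>
    Set.Finite.isClosed_biUnion (Finset.range (m + 1)).finite_toSet
      (fun i _ => isClosed_closedBall)
  have hBmono : ∀ n, Monotone (B n) := by
    intro n a b hab
    apply Set.biUnion_subset_biUnion_left
    intro i hi
    have h := Finset.mem_range.mp hi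
    exact Finset.mem_range.mpr (by omega)
  have hBunion : ∀ n, (⋃ m, B n m) = Set.univ := by
    intro n
    ext x
    simp only [Set.mem_iUnion, Set.mem_univ, iff_true]
    obtain ⟨i, hi⟩ := hu.exists_dist_lt x (by positivity : (0:ℝ) < 1 / (n + 1))
    refine ⟨i, Set.mem_biUnion (Finset.self_mem_range_succ i) ?_⟩
    exact mem_closedBall.mpr hi.le
  have key : ∀ n : ℕ, ∃ m, μ (B n m)ᶜ ≤ ε / 2 ^ (n + 1) := by
    intro n
    have h1 : Tendsto (fun m => μ (B n m)) atTop (𝓝 (μ (⋃ m, B n m))) :=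
      tendsto_measure_iUnion_atTop (hBmono n)
    rw [hBunion n] at h1
    have hδ : ε / 2 ^ (n + 1) ≠ 0 := by
      simp only [ne_eq, ENNReal.div_eq_zero_iff, not_or]
      exact ⟨hε, by simp⟩
    have h2 : Icc (μ Set.univ - ε / 2 ^ (n + 1)) (μ Set.univ + ε / 2 ^ (n + 1))
        ∈ 𝓝 (μ Set.univ) := ENNReal.Icc_mem_nhds (measure_ne_top μ _) hδ
    obtain ⟨m, hm⟩ := (h1.eventually_mem h2).exists
    refine ⟨m, ?_⟩
    rw [measure_compl (hBclosed n m).measurableSet (measure_ne_top μ _)]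
    exact tsub_le_iff_right.mpr (by
      rw [add_comm]; exact tsub_le_iff_right.mp hm.1)
  choose m hm using key
  refine ⟨⋂ n, B n (m n), ?_, ?_⟩
  · apply TotallyBounded.isCompact_of_isClosed
    · rw [Metric.totallyBounded_iff]
      intro δ hδ
      obtain ⟨n, hn⟩ := exists_nat_one_div_lt hδ
      refine ⟨u '' {i | i ∈ Finset.range (m n + 1)}, (Finset.range (m n + 1)).finite_toSet.image u, ?_⟩
      intro x hx
      have hx' : x ∈ B n (m n) := Set.mem_iInter.mp hx n
      obtain ⟨i, hi, hxi⟩ := Set.mem_iUnion₂.mp hx'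
      refine Set.mem_biUnion (Set.mem_image_of_mem u hi) ?_
      exact lt_of_le_of_lt (mem_closedBall.mp hxi) hn
    · exact isClosed_iInter fun n => hBclosed n (m n)
  · calc μ (⋂ n, B n (m n))ᶜ = μ (⋃ n, (B n (m n))ᶜ) := by rw [Set.compl_iInter]
      _ ≤ ∑' n, μ (B n (m n))ᶜ := measure_iUnion_le _
      _ ≤ ∑' n : ℕ, ε / 2 ^ (n + 1) := ENNReal.tsum_le_tsum fun n => hm n
      _ = ε := by
          have h2 : ∀ n : ℕ, ε / 2 ^ (n + 1) = ε * 2⁻¹ * 2⁻¹ ^ n := by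
            intro n
            rw [div_eq_mul_inv, pow_succ, ENNReal.mul_inv (by simp) (by simp),
              ENNReal.inv_pow]
            ring
          simp_rw [h2]
          rw [ENNReal.tsum_mul_left, ENNReal.tsum_geometric]
          rw [ENNReal.one_sub_inv_two, inv_inv, mul_assoc,
            ENNReal.inv_mul_cancel two_ne_zero ENNReal.ofNat_ne_top, mul_one]

theorem sup_atom_eq_inf_covers {X : Type*} [TopologicalSpace X] [PolishSpace X]
    [MeasurableSpace X] [BorelSpace X]
    (μ : Measure X) [IsProbabilityMeasure μ] :
    (⨆ x : X, μ {x}) =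
      ⨅ (n : ℕ) (U : Fin n → Set X) (_ : ∀ k, IsOpen (U k)) (_ : (⋃ k, U k) = Set.univ),
        ⨆ k, μ (closure (U k)) := by
  have hXne : Nonempty X := by
    by_contra h
    rw [not_nonempty_iff] at h
    have h1 : μ Set.univ = 1 := measure_univ
    rw [Set.univ_eq_empty_iff.mpr h, measure_empty] at h1
    exact zero_ne_one h1
  apply le_antisymm
  · refine le_iInf fun n => le_iInf fun U => le_iInf fun hUopen => le_iInf fun hUcover => ?_
    refine iSup_le fun x => ?_
    obtain ⟨k, hk⟩ : ∃ k, x ∈ U k :=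
      Set.mem_iUnion.mp (hUcover ▸ Set.mem_univ x)
    refine le_trans (measure_mono ?_) (le_iSup (fun k => μ (closure (U k))) k)
    exact Set.singleton_subset_iff.mpr (subset_closure hk)
  · set s := ⨆ x : X, μ {x} with hs
    refine ENNReal.le_of_forall_pos_le_add fun ε hε hstop => ?_
    letI := TopologicalSpace.upgradeIsCompletelyMetrizable X
    have hεnn : (ε : ℝ≥0∞) ≠ 0 := by exact_mod_cast hε.ne'
    -- choose small closed balls around every point
    have hrad : ∀ x : X, ∃ r : ℝ, 0 < r ∧ μ (closedBall x r) < s + ε := by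
      intro x
      have hanti : Antitone (fun n : ℕ => closedBall x (1 / (n + 1))) := by
        intro a b hab
        apply closedBall_subset_closedBall
        apply one_div_le_one_div_of_le (by positivity)
        exact_mod_cast by omega
      have h1 : Tendsto (fun n : ℕ => μ (closedBall x (1 / (n + 1)))) atTop
          (𝓝 (μ (⋂ n : ℕ, closedBall x (1 / (n + 1))))) :=
        tendsto_measure_iInter_atTop
          (fun n => isClosed_closedBall.measurableSet.nullMeasurableSet) hanti
          ⟨0, measure_ne_top μ _⟩
      have hint : (⋂ n : ℕ, closedBall x (1 / (n + 1))) = {x} := by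
        ext y
        simp only [Set.mem_iInter, mem_closedBall, Set.mem_singleton_iff]
        constructor
        · intro h
          rw [← dist_le_zero]
          by_contra hpos
          push_neg at hpos
          obtain ⟨n, hn⟩ := exists_nat_one_div_lt hpos
          exact absurd (h n) (not_le.mpr hn)
        · rintro rfl n
          simp only [dist_self]
          positivity
      rw [hint] at h1
      have hlt : μ {x} < s + ε :=
        lt_of_le_of_lt (le_iSup (fun x : X => μ {x}) x)
          (ENNReal.lt_add_right hstop.ne hεnn)
      obtain ⟨n, hn⟩ := (h1.eventually_lt_const hlt).exists
      exact ⟨1 / (n + 1), by positivity, hn⟩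
    choose r hr hμr using hrad
    obtain ⟨K, hK, hKc⟩ := aux_tight μ hεnn
    obtain ⟨t, htc⟩ := hK.elim_finite_subcover (fun x : X => ball x (r x))
      (fun x => isOpen_ball) (fun y _ => Set.mem_iUnion.mpr ⟨y, mem_ball_self (hr y)⟩)
    set W : Set X := ⋃ x ∈ t, ball x (r x) with hW
    have hWopen : IsOpen W := isOpen_biUnion fun x _ => isOpen_ball
    obtain ⟨δ, hδ, hδW⟩ := hK.exists_cthickening_subset_open hWopen htc
    set V : Set X := (cthickening (δ / 2) K)ᶜ with hV
    have hVopen : IsOpen V := (isClosed_cthickening).isOpen_compl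
    have hVclos : μ (closure V) ≤ ε := by
      refine le_trans (measure_mono ?_) hKc
      have h1 : V ⊆ (thickening (δ / 2) K)ᶜ :=
        Set.compl_subset_compl.mpr (thickening_subset_cthickening _ _)
      refine subset_trans (closure_minimal h1 isOpen_thickening.isClosed_compl) ?_
      exact Set.compl_subset_compl.mpr (self_subset_thickening (by positivity) K)
    classical
    set f : Fin t.card ≃ {x // x ∈ t} := (t.equivFin).symm with hf
    set U : Fin (t.card + 1) → Set X :=
      Fin.cons V (fun i => ball (f i : X) (r (f i))) with hU
    have hUopen : ∀ k, IsOpen (U k) := by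
      intro k
      induction k using Fin.cases with
      | zero => simpa [hU] using hVopen
      | succ i => simpa [hU] using isOpen_ball
    have hUcover : (⋃ k, U k) = Set.univ := by
      ext y
      simp only [Set.mem_iUnion, Set.mem_univ, iff_true]
      by_cases hy : y ∈ V
      · exact ⟨0, by simpa [hU] using hy⟩
      · have h1 : y ∈ cthickening (δ / 2) K := by
          simpa [hV] using hy
        have h2 : y ∈ W := hδW (cthickening_mono (by linarith) K h1)
        obtain ⟨x, hx, hxy⟩ := Set.mem_iUnion₂.mp h2
        refine ⟨(f.symm ⟨x, hx⟩).succ, ?_⟩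
        simpa [hU, Fin.cons_succ, Equiv.apply_symm_apply] using hxy
    have hle : (⨅ (n : ℕ) (U : Fin n → Set X) (_ : ∀ k, IsOpen (U k))
        (_ : (⋃ k, U k) = Set.univ), ⨆ k, μ (closure (U k)))
        ≤ ⨆ k, μ (closure (U k)) := by
      refine le_trans (iInf_le _ (t.card + 1)) ?_
      refine le_trans (iInf_le _ U) ?_
      exact le_trans (iInf_le _ hUopen) (iInf_le _ hUcover)
    refine hle.trans (iSup_le fun k => ?_)
    induction k using Fin.cases with
    | zero =>
        refine le_trans ?_ (le_add_self : (ε : ℝ≥0∞) ≤ s + ε)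
        simpa [hU] using hVclos
    | succ i =>
        have h1 : closure (U i.succ) ⊆ closedBall (f i : X) (r (f i)) := by
          rw [hU, Fin.cons_succ]
          exact closure_ball_subset_closedBall
        exact (measure_mono h1).trans (hμr _).le
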